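/- Let Ωᵢ = B̄(ωᵢ; rᵢ) (i = 1, …, n, n > 1) be closed balls in ℝᵐ (Euclidean norm) with empty intersection, let B̄(x̄; r) be the smallest intersecting ball (x̄ minimizes D(x) = max_i (‖x − ωᵢ‖ − rᵢ), r = D(x̄)), let P = {ω₁, …, ωₙ}, r_max = max_i rᵢ, r_min = min_i rᵢ, and ℓ = min{m+1, n}. Then (1/2)·diam P − r_max ≤ r ≤ √((ℓ−1)/(2ℓ))·diam P − r_min. -/

import Mathlib

open Metric Finset

local notation "⟪" x ", " y "⟫" => @inner ℝ _ _ x y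

set_option maxHeartbeats 2000000 in
lemma jung_aux {m n : ℕ} (hn : 0 < n) (ω : Fin n → EuclideanSpace ℝ (Fin m))
    (ℓ : ℕ) (hℓ : ℓ = min (m + 1) n) :
    ∃ x : EuclideanSpace ℝ (Fin m), ∀ i, ‖x - ω i‖ ≤
      Real.sqrt (((ℓ : ℝ) - 1) / (2 * ℓ)) * Metric.diam (Set.range ω) := by
  classical
  have hne : (Finset.univ : Finset (Fin n)).Nonempty := ⟨⟨0, hn⟩, Finset.mem_univ _⟩
  set d := Metric.diam (Set.range ω) with hd
  have hd0 : 0 ≤ d := Metric.diam_nonneg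
  have hdist : ∀ i j, ‖ω i - ω j‖ ≤ d := by
    intro i j
    rw [← dist_eq_norm]
    exact Metric.dist_le_diam_of_mem (Set.finite_range ω).isBounded ⟨i, rfl⟩ ⟨j, rfl⟩
  set K := convexHull ℝ (Set.range ω) with hK
  have hKcp : IsCompact K := (Set.finite_range ω).isCompact_convexHull ℝ
  have hKconv : Convex ℝ K := convex_convexHull _ _
  have hKne : K.Nonempty := ⟨ω ⟨0, hn⟩, subset_convexHull _ _ ⟨_, rfl⟩⟩
  set f : EuclideanSpace ℝ (Fin m) → ℝ :=
    fun x => Finset.univ.sup' hne (fun i => ‖x - ω i‖) with hf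
  have hf_cont : Continuous f := by
    rw [continuous_iff_continuousAt]
    intro x
    exact ContinuousAt.finset_sup'_apply hne fun i _ =>
      ((continuous_id.sub continuous_const).norm).continuousAt
  obtain ⟨x₀, hx₀K, hminf⟩ := hKcp.exists_isMinOn hKne hf_cont.continuousOn
  set R := f x₀ with hRdef
  have hR0 : 0 ≤ R := le_trans (norm_nonneg (x₀ - ω ⟨0, hn⟩)) (Finset.le_sup' (fun i => ‖x₀ - ω i‖) (Finset.mem_univ (⟨0, hn⟩ : Fin n)))
  have hle : ∀ i, ‖x₀ - ω i‖ ≤ R := fun i => Finset.le_sup' (fun i => ‖x₀ - ω i‖) (Finset.mem_univ i)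
  set A : Set (EuclideanSpace ℝ (Fin m)) := {p | p ∈ Set.range ω ∧ ‖x₀ - p‖ = R} with hA
  have hAsub : A ⊆ Set.range ω := fun p hp => hp.1
  have hAfin : A.Finite := (Set.finite_range ω).subset hAsub
  -- the key claim: x₀ lies in the convex hull of the farthest points
  have hxA : x₀ ∈ convexHull ℝ A := by
    by_contra hxA
    have hAne : A.Nonempty := by
      obtain ⟨i, -, hi⟩ := Finset.exists_mem_eq_sup' hne (fun i => ‖x₀ - ω i‖)
      exact ⟨ω i, ⟨i, rfl⟩, hi.symm⟩
    have hAcl : IsClosed (convexHull ℝ A) := hAfin.isClosed_convexHull ℝ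
    have hAconv : Convex ℝ (convexHull ℝ A) := convex_convexHull _ _
    have hAhne : (convexHull ℝ A).Nonempty := hAne.mono (subset_convexHull _ _)
    obtain ⟨p, hpA, hproj⟩ :=
      exists_norm_eq_iInf_of_complete_convex hAhne hAcl.isComplete hAconv x₀
    rw [norm_eq_iInf_iff_real_inner_le_zero hAconv hpA] at hproj
    set δ := ‖x₀ - p‖ with hδdef
    have hδ : 0 < δ := by
      rw [hδdef, norm_pos_iff, sub_ne_zero]
      intro h; exact hxA (h ▸ hpA)
    set b := Finset.univ.inf' hne
      (fun i => if ‖x₀ - ω i‖ < R then R - ‖x₀ - ω i‖ else 1) with hbdef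
    have hb : 0 < b := by
      rw [hbdef, Finset.lt_inf'_iff]
      intro i _
      by_cases h : ‖x₀ - ω i‖ < R
      · simp only [h, if_true]; linarith
      · simp [h]
    set t := min 1 (b / (2 * δ)) with htdef
    have ht0 : 0 < t := lt_min one_pos (by positivity)
    have ht1 : t ≤ 1 := min_le_left _ _
    have htδ : t * δ < b := by
      have h' : t ≤ b / (2 * δ) := min_le_right _ _
      have h'' : t * δ ≤ b / (2 * δ) * δ := mul_le_mul_of_nonneg_right h' hδ.le
      have h3 : b / (2 * δ) * δ = b / 2 := by
        field_simp
      rw [h3] at h''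
      linarith
    set y := x₀ + t • (p - x₀) with hydef
    have hyK : y ∈ K := by
      have hpK : p ∈ K := by
        refine convexHull_min ?_ hKconv hpA
        exact hAsub.trans (subset_convexHull _ _)
      have hmem := hKconv hx₀K hpK (by linarith : (0:ℝ) ≤ 1 - t) ht0.le
        (by ring : (1 - t) + t = 1)
      have hy' : y = (1 - t) • x₀ + t • p := by rw [hydef]; module
      rw [hy']; exact hmem
    have hylt : f y < R := by
      rw [hf]
      rw [Finset.sup'_lt_iff]
      intro i _
      by_cases hcase : ‖x₀ - ω i‖ < R
      · have h1 : ‖y - ω i‖ ≤ ‖x₀ - ω i‖ + t * δ := by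
          have hy' : y - ω i = (x₀ - ω i) + t • (p - x₀) := by rw [hydef]; abel
          rw [hy']
          refine le_trans (norm_add_le _ _) ?_
          rw [norm_smul, Real.norm_eq_abs, abs_of_pos ht0, norm_sub_rev p x₀]
        have h2 : b ≤ R - ‖x₀ - ω i‖ := by
          refine le_trans (Finset.inf'_le _ (Finset.mem_univ i)) ?_
          simp [hcase]
        linarith
      · have heq : ‖x₀ - ω i‖ = R := le_antisymm (hle i) (not_lt.1 hcase)
        have hωA : ω i ∈ A := ⟨⟨i, rfl⟩, heq⟩
        have hip : ⟪x₀ - p, ω i - p⟫ ≤ 0 := hproj _ (subset_convexHull _ _ hωA)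
        have hkey : ⟪x₀ - ω i, p - x₀⟫ ≤ -δ ^ 2 := by
          have hsplit : (x₀ - ω i : EuclideanSpace ℝ (Fin m))
              = (x₀ - p) + (p - ω i) := by abel
          rw [hsplit, inner_add_left]
          have e1 : ⟪x₀ - p, p - x₀⟫ = -δ ^ 2 := by
            rw [show p - x₀ = -(x₀ - p) by abel, inner_neg_right,
              real_inner_self_eq_norm_sq, hδdef]
          have e2 : ⟪(p - ω i : EuclideanSpace ℝ (Fin m)), p - x₀⟫
              = ⟪x₀ - p, ω i - p⟫ := by
            rw [show p - ω i = -(ω i - p) by abel, show p - x₀ = -(x₀ - p) by abel,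
              inner_neg_neg, real_inner_comm]
          rw [e1, e2]; linarith
        have hsq : ‖y - ω i‖ ^ 2 ≤ R ^ 2 - t * δ ^ 2 := by
          have hy' : y - ω i = (x₀ - ω i) + t • (p - x₀) := by rw [hydef]; abel
          rw [hy', norm_add_sq_real, real_inner_smul_right, norm_smul,
            Real.norm_eq_abs, abs_of_pos ht0, heq, norm_sub_rev p x₀]
          have hA1 : t * ⟪x₀ - ω i, p - x₀⟫ ≤ t * (-δ ^ 2) :=
            mul_le_mul_of_nonneg_left hkey ht0.le
          have hA2 : (t * δ) ^ 2 ≤ t * δ ^ 2 := by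
            nlinarith [mul_le_mul_of_nonneg_right
              (mul_le_mul_of_nonneg_left ht1 ht0.le) (sq_nonneg δ)]
          linarith [hA1, hA2]
        have hlt : ‖y - ω i‖ ^ 2 < R ^ 2 := by
          nlinarith [hsq, mul_pos ht0 (pow_pos hδ 2)]
        exact lt_of_pow_lt_pow_left₀ 2 hR0 hlt
    exact absurd (hminf hyK) (not_le.2 hylt)
  -- Carathéodory
  obtain ⟨ι, hfι, z, w, hzA, hzind, hw0, hw1, hwz⟩ :=
    eq_pos_convex_span_of_mem_convexHull hxA
  have hιne : Nonempty ι := by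
    by_contra h
    rw [not_nonempty_iff] at h
    rw [Finset.sum_eq_zero (fun i _ => (h.elim i))] at hw1
    norm_num at hw1
  set k := Fintype.card ι with hk
  have hk1 : 1 ≤ k := Fintype.card_pos
  have hkm : k ≤ m + 1 := by
    refine le_trans hzind.card_le_finrank_succ ?_
    have := Submodule.finrank_le (vectorSpan ℝ (Set.range z))
    simp only [finrank_euclideanSpace_fin] at this
    omega
  have hkn : k ≤ n := by
    have hinj : Function.Injective z := hzind.injective
    choose g hg using fun i => hAsub (hzA ⟨i, rfl⟩)
    have hginj : Function.Injective g := by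
      intro a b hab
      apply hinj
      rw [← hg a, ← hg b, hab]
    simpa using Fintype.card_le_of_injective g hginj
  have hkℓ : k ≤ ℓ := by omega
  have hℓ1 : 1 ≤ ℓ := by omega
  have hzR : ∀ i, ‖x₀ - z i‖ = R := fun i => (hzA ⟨i, rfl⟩).2
  have hzd : ∀ i j, ‖z i - z j‖ ≤ d := by
    intro i j
    obtain ⟨a, ha⟩ := hAsub (hzA ⟨i, rfl⟩)
    obtain ⟨b, hb⟩ := hAsub (hzA ⟨j, rfl⟩)
    rw [← ha, ← hb]; exact hdist a b
  -- key identity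
  have key : ∀ j, ∑ i, w i * ‖z i - z j‖ ^ 2 = 2 * R ^ 2 := by
    intro j
    have h0 : ∑ i, w i • (z i - x₀) = (0 : EuclideanSpace ℝ (Fin m)) := by
      simp only [smul_sub, Finset.sum_sub_distrib, hwz, ← Finset.sum_smul, hw1, one_smul,
        sub_self]
    have expand : ∀ i, ‖z i - z j‖ ^ 2
        = ‖z i - x₀‖ ^ 2 + 2 * ⟪z i - x₀, x₀ - z j⟫ + ‖x₀ - z j‖ ^ 2 := by
      intro i
      rw [show z i - z j = (z i - x₀) + (x₀ - z j) by abel, norm_add_sq_real]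
    have hinner : ∑ i, w i * ⟪z i - x₀, x₀ - z j⟫ = 0 := by
      have : ∑ i, w i * ⟪z i - x₀, x₀ - z j⟫ = ⟪∑ i, w i • (z i - x₀), x₀ - z j⟫ := by
        rw [sum_inner]
        exact Finset.sum_congr rfl fun i _ => (real_inner_smul_left _ _ _).symm
      rw [this, h0, inner_zero_left]
    have hsq : ∑ i, w i * ‖z i - x₀‖ ^ 2 = R ^ 2 := by
      have : ∀ i, ‖z i - x₀‖ = R := fun i => by rw [norm_sub_rev]; exact hzR i
      simp_rw [this, ← Finset.sum_mul, hw1, one_mul]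
    calc ∑ i, w i * ‖z i - z j‖ ^ 2
        = ∑ i, (w i * ‖z i - x₀‖ ^ 2 + w i * (2 * ⟪z i - x₀, x₀ - z j⟫)
            + w i * ‖x₀ - z j‖ ^ 2) := by
          refine Finset.sum_congr rfl fun i _ => ?_
          rw [expand i]; ring
      _ = R ^ 2 + 2 * (∑ i, w i * ⟪z i - x₀, x₀ - z j⟫) + R ^ 2 := by
          rw [Finset.sum_add_distrib, Finset.sum_add_distrib, hsq]
          congr 1
          · congr 1
            rw [Finset.mul_sum]
            exact Finset.sum_congr rfl fun i _ => by ring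
          · rw [← Finset.sum_mul, hw1, one_mul, hzR j]
      _ = 2 * R ^ 2 := by rw [hinner]; ring
  -- upper bound for the identity
  have bound : ∀ j, ∑ i, w i * ‖z i - z j‖ ^ 2 ≤ (1 - w j) * d ^ 2 := by
    intro j
    calc ∑ i, w i * ‖z i - z j‖ ^ 2
        ≤ ∑ i, (if i = j then 0 else w i * d ^ 2) := by
          refine Finset.sum_le_sum fun i _ => ?_
          by_cases h : i = j
          · simp [h]
          · simp only [h, if_false]
            have h1 : ‖z i - z j‖ ^ 2 ≤ d ^ 2 :=
              pow_le_pow_left₀ (norm_nonneg _) (hzd i j) 2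
            exact mul_le_mul_of_nonneg_left h1 (hw0 i).le
      _ = (1 - w j) * d ^ 2 := by
          have : ∀ i, (if i = j then 0 else w i * d ^ 2)
              = w i * d ^ 2 - (if i = j then w i * d ^ 2 else 0) := by
            intro i; by_cases h : i = j <;> simp [h]
          simp_rw [this, Finset.sum_sub_distrib, Finset.sum_ite_eq' Finset.univ j
            (fun i => w i * d ^ 2), Finset.mem_univ, if_true, ← Finset.sum_mul, hw1]
          ring
  -- combine
  have hsum_sq : (1 : ℝ) ≤ k * ∑ j, w j ^ 2 := by
    have := sq_sum_le_card_mul_sum_sq (s := (Finset.univ : Finset ι)) (f := w)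
    rw [hw1] at this
    simpa [hk] using this
  have hfinal : 2 * R ^ 2 ≤ (1 - 1 / k) * d ^ 2 := by
    have h1 : 2 * R ^ 2 = ∑ j, w j * (2 * R ^ 2) := by
      rw [← Finset.sum_mul, hw1, one_mul]
    have h2 : ∑ j, w j * (2 * R ^ 2) ≤ ∑ j, w j * ((1 - w j) * d ^ 2) := by
      refine Finset.sum_le_sum fun j _ => ?_
      rw [← key j]
      exact mul_le_mul_of_nonneg_left (bound j) (hw0 j).le
    have h5 : ∑ j, w j * ((1 - w j) * d ^ 2) = (1 - ∑ j, w j ^ 2) * d ^ 2 := by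
      have e : ∑ j, w j * ((1 - w j) * d ^ 2)
          = (∑ j, w j) * d ^ 2 - (∑ j, w j ^ 2) * d ^ 2 := by
        rw [Finset.sum_mul, Finset.sum_mul, ← Finset.sum_sub_distrib]
        exact Finset.sum_congr rfl fun j _ => by ring
      rw [e, hw1]; ring
    have hk0 : (0:ℝ) < (k:ℝ) := by exact_mod_cast hk1
    have h6 : (1 - ∑ j, w j ^ 2) * d ^ 2 ≤ (1 - 1 / (k:ℝ)) * d ^ 2 := by
      apply mul_le_mul_of_nonneg_right _ (by positivity)
      have h7 : 1 / (k:ℝ) ≤ ∑ j, w j ^ 2 := by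
        rw [div_le_iff₀ hk0]
        nlinarith [hsum_sq]
      linarith
    linarith [h1, h2, h5, h6]
  -- conclude
  refine ⟨x₀, fun i => le_trans (hle i) ?_⟩
  have hk0 : (0:ℝ) < k := by exact_mod_cast hk1
  have hℓ0 : (0:ℝ) < ℓ := by exact_mod_cast hℓ1
  have hkℓ' : (k:ℝ) ≤ ℓ := by exact_mod_cast hkℓ
  have hRsq : R ^ 2 ≤ ((ℓ : ℝ) - 1) / (2 * ℓ) * d ^ 2 := by
    have h3 : (1 - 1 / (k:ℝ)) * d ^ 2 ≤ ((k:ℝ) - 1) / k * d ^ 2 := by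
      apply mul_le_mul_of_nonneg_right _ (by positivity)
      rw [sub_div, div_self hk0.ne']
    have h4 : ((k:ℝ) - 1) / k * d ^ 2 ≤ ((ℓ:ℝ) - 1) / ℓ * d ^ 2 := by
      apply mul_le_mul_of_nonneg_right _ (by positivity)
      rw [div_le_div_iff₀ hk0 hℓ0]
      nlinarith
    have e2 : ((ℓ:ℝ) - 1) / (2 * ℓ) * d ^ 2 = (((ℓ:ℝ) - 1) / ℓ * d ^ 2) / 2 := by
      rw [show (2:ℝ) * ℓ = ℓ * 2 by ring, ← div_div]; ring
    rw [e2]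
    linarith [hfinal, h3, h4]
  have hc0 : 0 ≤ ((ℓ : ℝ) - 1) / (2 * ℓ) := by
    apply div_nonneg _ (by positivity)
    have : (1:ℝ) ≤ ℓ := by exact_mod_cast hℓ1
    linarith
  calc R = Real.sqrt (R ^ 2) := (Real.sqrt_sq hR0).symm
    _ ≤ Real.sqrt (((ℓ : ℝ) - 1) / (2 * ℓ) * d ^ 2) := Real.sqrt_le_sqrt hRsq
    _ = Real.sqrt (((ℓ : ℝ) - 1) / (2 * ℓ)) * d := by
        rw [Real.sqrt_mul hc0, Real.sqrt_sq hd0]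

set_option maxHeartbeats 1000000 in
/-- Estimates for the radius of the smallest intersecting ball generated by closed
balls in ℝᵐ with empty intersection:
`(1/2)·diam P − r_max ≤ r ≤ √((ℓ−1)/(2ℓ))·diam P − r_min`, where `P` is the set of
centers and `ℓ = min{m+1, n}`. -/
theorem radius_estimate_balls
    (m n : ℕ) (hn : 1 < n) (ω : Fin n → EuclideanSpace ℝ (Fin m))
    (r : Fin n → ℝ) (hr : ∀ i, 0 ≤ r i)
    (hint : (⋂ i, Metric.closedBall (ω i) (r i)) = ∅)
    (D : EuclideanSpace ℝ (Fin m) → ℝ)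
    (hD : D = fun x => Finset.univ.sup' (Finset.univ_nonempty_iff.2 ⟨⟨0, by omega⟩⟩)
      fun i => ‖x - ω i‖ - r i)
    (xbar : EuclideanSpace ℝ (Fin m)) (hmin : IsMinOn D Set.univ xbar)
    (rad : ℝ) (hrad : rad = D xbar)
    (rmax rmin : ℝ)
    (hrmax : rmax = Finset.univ.sup' (Finset.univ_nonempty_iff.2 ⟨⟨0, by omega⟩⟩) r)
    (hrmin : rmin = Finset.univ.inf' (Finset.univ_nonempty_iff.2 ⟨⟨0, by omega⟩⟩) r)
    (ℓ : ℕ) (hℓ : ℓ = min (m + 1) n) :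
    (1 / 2) * Metric.diam (Set.range ω) - rmax ≤ rad ∧
      rad ≤ Real.sqrt (((ℓ : ℝ) - 1) / (2 * ℓ)) * Metric.diam (Set.range ω) - rmin := by
  set d := Metric.diam (Set.range ω) with hd
  have i0 : Fin n := ⟨0, by omega⟩
  have hD' : ∀ x i, ‖x - ω i‖ - r i ≤ D x := by
    intro x i
    rw [hD]
    exact Finset.le_sup' (fun i => ‖x - ω i‖ - r i) (Finset.mem_univ i)
  have hrmax' : ∀ i, r i ≤ rmax := by
    intro i; rw [hrmax]; exact Finset.le_sup' r (Finset.mem_univ i)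
  have hrmin' : ∀ i, rmin ≤ r i := by
    intro i; rw [hrmin]; exact Finset.inf'_le r (Finset.mem_univ i)
  have hball : ∀ i, ‖xbar - ω i‖ ≤ rad + rmax := by
    intro i
    have h1 := hD' xbar i
    have h2 := hrmax' i
    rw [hrad]; linarith
  have hradmax : 0 ≤ rad + rmax := le_trans (norm_nonneg _) (hball i0)
  constructor
  · have hdle : d ≤ 2 * (rad + rmax) := by
      apply Metric.diam_le_of_forall_dist_le (by linarith)
      rintro x ⟨i, rfl⟩ y ⟨j, rfl⟩
      rw [dist_eq_norm]
      calc ‖ω i - ω j‖ = ‖-(xbar - ω i) + (xbar - ω j)‖ := by congr 1; abel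
        _ ≤ ‖-(xbar - ω i)‖ + ‖xbar - ω j‖ := norm_add_le _ _
        _ = ‖xbar - ω i‖ + ‖xbar - ω j‖ := by rw [norm_neg]
        _ ≤ (rad + rmax) + (rad + rmax) := add_le_add (hball i) (hball j)
        _ = 2 * (rad + rmax) := by ring
    linarith
  · obtain ⟨x, hx⟩ := jung_aux (by omega : 0 < n) ω ℓ hℓ
    have h1 : rad ≤ D x := by
      rw [hrad]
      exact isMinOn_iff.1 hmin x (Set.mem_univ x)
    have h2 : D x ≤ Real.sqrt (((ℓ : ℝ) - 1) / (2 * ℓ)) * d - rmin := by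
      rw [hD]
      apply Finset.sup'_le
      intro i _
      have := hx i
      have := hrmin' i
      linarith
    linarith
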